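/- For every real Δ > 0 and every integer k ≥ 1, writing T_n = Σ_{m=0}^{n} [(−n)_m ((4Δ/3)+n−1)_m (Δ/3)_m] / [((2Δ/3)_m)² m!], one has the two-term recursion T_{2k} = [3(2k−1)(Δ+3k−3) / ((2Δ+3k−3)(2Δ+6k−3))] · T_{2k−2}. In particular the constant of proportionality is positive, so T_{2k} > 0 for every k ≥ 0. -/

import Mathlib

/-- Pochhammer symbol `(x)_m = x(x+1)⋯(x+m−1)`, with `(x)_0 = 1`. -/
noncomputable def poch (x : ℝ) : ℕ → ℝ
  | 0 => 1
  | m + 1 => poch x m * (x + m)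

lemma poch_succ (x : ℝ) (m : ℕ) : poch x (m + 1) = poch x m * (x + m) := rfl

lemma poch_mul_add (x : ℝ) (m : ℕ) : poch x m * (x + m) = x * poch (x + 1) m := by
  induction m with
  | zero => simp [poch]
  | succ m ih =>
      rw [poch_succ, poch_succ]
      push_cast
      calc poch x m * (x + m) * (x + (m + 1)) = poch x m * (x + (m+1)) * (x + m) := by ring
        _ = x * poch (x+1) m * (x + 1 + m) := by
              rw [show x + ((m:ℝ)+1) = x + 1 + m by ring]; rw [← ih]; ring
        _ = x * (poch (x+1) m * (x + 1 + m)) := by ring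

lemma poch_two (x : ℝ) (m : ℕ) :
    poch x m * ((x + m) * (x + m + 1)) = x * (x + 1) * poch (x + 2) m := by
  have h1 := poch_mul_add x m
  have h2 := poch_mul_add (x + 1) m
  calc poch x m * ((x + m) * (x + m + 1))
      = (poch x m * (x + m)) * (x + m + 1) := by ring
    _ = x * (poch (x+1) m * (x + 1 + m)) := by rw [h1]; ring
    _ = x * ((x+1) * poch (x+1+1) m) := by rw [h2]
    _ = x * (x + 1) * poch (x + 2) m := by rw [show x + 1 + 1 = x + 2 by ring]; ring

lemma poch_pos {x : ℝ} (hx : 0 < x) (m : ℕ) : 0 < poch x m := by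
  induction m with
  | zero => norm_num [poch]
  | succ m ih => rw [poch_succ]; positivity

/-- summand -/
noncomputable def Fc (Δ : ℝ) (n m : ℕ) : ℝ :=
  (poch (-(n : ℝ)) m * poch (4*Δ/3 + (n : ℝ) - 1) m * poch (Δ/3) m)
      / ((poch (2*Δ/3) m)^2 * (m.factorial : ℝ))

/-- certificate function -/
noncomputable def Gc (Δ : ℝ) (n m : ℕ) : ℝ :=
  (m : ℝ) * (2*Δ/3 + (m : ℝ) - 1)^2 *
    (poch (-((n : ℝ) + 2)) m * poch (4*Δ/3 + (n : ℝ) - 1) m * poch (Δ/3) m)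
      / ((poch (2*Δ/3) m)^2 * (m.factorial : ℝ))

lemma pointwise (Δ : ℝ) (hΔ : 0 < Δ) (n m : ℕ) (hb : 4*Δ/3 + (n:ℝ) - 1 ≠ 0) :
    (4*Δ/3 + (n:ℝ) - 1) * (4*Δ/3 + (n:ℝ)) * ((n:ℝ)+1) * ((n:ℝ)+2) *
      ( ((n:ℝ) + 4*Δ/3) * ((n:ℝ) + 2*Δ/3 + 1) * Fc Δ (n+2) m
        - ((n:ℝ)+1) * ((n:ℝ) + 2*Δ/3) * Fc Δ n m )
    = (-2*((n:ℝ)+1)*((n:ℝ) + 4*Δ/3)*(2*(n:ℝ) + 4*Δ/3 + 1)) * (Gc Δ n (m+1) - Gc Δ n m) := by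
  have hE : poch (2*Δ/3) m ≠ 0 := ne_of_gt (poch_pos (by linarith) m)
  have hfac : (m.factorial : ℝ) ≠ 0 := by positivity
  have hdm : 2*Δ/3 + (m:ℝ) ≠ 0 := by positivity
  have hm1 : (m:ℝ) + 1 ≠ 0 := by positivity
  have hb1 : 4*Δ/3 + (n:ℝ) ≠ 0 := by positivity
  have hn1 : (n:ℝ) + 1 ≠ 0 := by positivity
  have hn2 : (n:ℝ) + 2 ≠ 0 := by positivity
  -- relations
  have hA : poch (-((n:ℝ)+2)) m * (((m:ℝ) - (n+2)) * ((m:ℝ) - (n+1)))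
      = ((n:ℝ)+2) * ((n:ℝ)+1) * poch (-(n:ℝ)) m := by
    have := poch_two (-((n:ℝ)+2)) m
    rw [show -((n:ℝ)+2) + 2 = -(n:ℝ) by ring] at this
    calc poch (-((n:ℝ)+2)) m * (((m:ℝ) - (n+2)) * ((m:ℝ) - (n+1)))
        = poch (-((n:ℝ)+2)) m * ((-((n:ℝ)+2) + m) * (-((n:ℝ)+2) + m + 1)) := by ring
      _ = -((n:ℝ)+2) * (-((n:ℝ)+2) + 1) * poch (-(n:ℝ)) m := this
      _ = ((n:ℝ)+2) * ((n:ℝ)+1) * poch (-(n:ℝ)) m := by ring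
  have hB : poch (4*Δ/3 + (n:ℝ) - 1) m
        * ((4*Δ/3 + (n:ℝ) - 1 + m) * (4*Δ/3 + (n:ℝ) - 1 + m + 1))
      = (4*Δ/3 + (n:ℝ) - 1) * (4*Δ/3 + (n:ℝ)) * poch (4*Δ/3 + (n:ℝ) + 1) m := by
    have := poch_two (4*Δ/3 + (n:ℝ) - 1) m
    rw [show 4*Δ/3 + (n:ℝ) - 1 + 1 = 4*Δ/3 + (n:ℝ) by ring,
        show 4*Δ/3 + (n:ℝ) - 1 + 2 = 4*Δ/3 + (n:ℝ) + 1 by ring] at this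
    exact this
  -- casts
  have hcast1 : (-(((n:ℕ)+2 : ℕ) : ℝ)) = -((n:ℝ)+2) := by push_cast; ring
  have hcast2 : (4*Δ/3 + (((n:ℕ)+2 : ℕ):ℝ) - 1) = 4*Δ/3 + (n:ℝ) + 1 := by push_cast; ring
  simp only [Fc, Gc]
  rw [hcast1, hcast2]
  rw [poch_succ (-((n:ℝ)+2)) m, poch_succ (4*Δ/3 + (n:ℝ) - 1) m, poch_succ (Δ/3) m,
      poch_succ (2*Δ/3) m, Nat.factorial_succ]
  push_cast
  obtain ⟨A2, hA2⟩ : ∃ x, poch (-((n:ℝ)+2)) m = x := ⟨_, rfl⟩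
  obtain ⟨A0, hA0⟩ : ∃ x, poch (-(n:ℝ)) m = x := ⟨_, rfl⟩
  obtain ⟨B0, hB0⟩ : ∃ x, poch (4*Δ/3 + (n:ℝ) - 1) m = x := ⟨_, rfl⟩
  obtain ⟨B2, hB2⟩ : ∃ x, poch (4*Δ/3 + (n:ℝ) + 1) m = x := ⟨_, rfl⟩
  obtain ⟨C, hC⟩ : ∃ x, poch (Δ/3) m = x := ⟨_, rfl⟩
  obtain ⟨E, hEv⟩ : ∃ x, poch (2*Δ/3) m = x := ⟨_, rfl⟩
  obtain ⟨f, hfv⟩ : ∃ x, ((m.factorial : ℕ) : ℝ) = x := ⟨_, rfl⟩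
  rw [hA2, hA0, hB0, hB2, hC, hEv, hfv]
  rw [hA2, hA0] at hA
  rw [hB0, hB2] at hB
  rw [hEv] at hE
  rw [hfv] at hfac
  have hD : (E^2*f) ≠ 0 := mul_ne_zero (pow_ne_zero 2 hE) hfac
  have hD1 : ((E * (2*Δ/3 + (m:ℝ)))^2 * (((m:ℝ)+1)*f)) ≠ 0 :=
    mul_ne_zero (pow_ne_zero 2 (mul_ne_zero hE hdm)) (mul_ne_zero hm1 hfac)
  have key1 : ((m:ℝ) + 1) * (2*Δ/3 + ((m:ℝ)+1) - 1)^2 *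
        (A2 * (-((n:ℝ)+2) + (m:ℝ)) * (B0 * (4*Δ/3 + (n:ℝ) - 1 + (m:ℝ))) * (C * (Δ/3 + (m:ℝ)))) /
        ((E * (2*Δ/3 + (m:ℝ)))^2 * (((m:ℝ)+1)*f))
      = A2 * (-((n:ℝ)+2) + (m:ℝ)) * (B0 * (4*Δ/3 + (n:ℝ) - 1 + (m:ℝ))) * (C * (Δ/3 + (m:ℝ)))
        / (E^2*f) := by
    rw [div_eq_div_iff hD1 hD]
    ring
  rw [key1]
  have main : (4*Δ/3 + (n:ℝ) - 1) * (4*Δ/3 + (n:ℝ)) * ((n:ℝ)+1) * ((n:ℝ)+2) *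
        (((n:ℝ) + 4*Δ/3) * ((n:ℝ) + 2*Δ/3 + 1) * (A2 * B2 * C)
          - ((n:ℝ)+1) * ((n:ℝ) + 2*Δ/3) * (A0 * B0 * C))
      = -2 * ((n:ℝ)+1) * ((n:ℝ) + 4*Δ/3) * (2*(n:ℝ) + 4*Δ/3 + 1) *
        ((A2 * (-((n:ℝ)+2) + (m:ℝ))) * (B0 * (4*Δ/3 + (n:ℝ) - 1 + (m:ℝ))) * (C * (Δ/3 + (m:ℝ)))
          - (m:ℝ) * (2*Δ/3 + (m:ℝ) - 1)^2 * (A2 * B0 * C)) := by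
    linear_combination
      ((4*Δ/3+(n:ℝ)-1)*(4*Δ/3+(n:ℝ))*((n:ℝ)+1)*((n:ℝ)+2*Δ/3)*B0*C) * hA
      - (((n:ℝ)+4*Δ/3)*((n:ℝ)+2*Δ/3+1)*((n:ℝ)+1)*((n:ℝ)+2)*A2*C) * hB
  calc (4 * Δ / 3 + (n:ℝ) - 1) * (4 * Δ / 3 + (n:ℝ)) * ((n:ℝ) + 1) * ((n:ℝ) + 2) *
      (((n:ℝ) + 4 * Δ / 3) * ((n:ℝ) + 2 * Δ / 3 + 1) * (A2 * B2 * C / (E ^ 2 * f)) -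
        ((n:ℝ) + 1) * ((n:ℝ) + 2 * Δ / 3) * (A0 * B0 * C / (E ^ 2 * f)))
      = ((4*Δ/3 + (n:ℝ) - 1) * (4*Δ/3 + (n:ℝ)) * ((n:ℝ)+1) * ((n:ℝ)+2) *
        (((n:ℝ) + 4*Δ/3) * ((n:ℝ) + 2*Δ/3 + 1) * (A2 * B2 * C)
          - ((n:ℝ)+1) * ((n:ℝ) + 2*Δ/3) * (A0 * B0 * C))) / (E^2*f) := by ring
    _ = (-2 * ((n:ℝ)+1) * ((n:ℝ) + 4*Δ/3) * (2*(n:ℝ) + 4*Δ/3 + 1) *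
        ((A2 * (-((n:ℝ)+2) + (m:ℝ))) * (B0 * (4*Δ/3 + (n:ℝ) - 1 + (m:ℝ))) * (C * (Δ/3 + (m:ℝ)))
          - (m:ℝ) * (2*Δ/3 + (m:ℝ) - 1)^2 * (A2 * B0 * C))) / (E^2*f) := by rw [main]
    _ = -2 * ((n:ℝ) + 1) * ((n:ℝ) + 4 * Δ / 3) * (2 * (n:ℝ) + 4 * Δ / 3 + 1) *
      (A2 * (-((n:ℝ) + 2) + (m:ℝ)) * (B0 * (4 * Δ / 3 + (n:ℝ) - 1 + (m:ℝ))) * (C * (Δ / 3 + (m:ℝ))) /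
          (E ^ 2 * f) -
        (m:ℝ) * (2 * Δ / 3 + (m:ℝ) - 1) ^ 2 * (A2 * B0 * C) / (E ^ 2 * f)) := by ring

lemma poch_nat_zero (n m : ℕ) (h : n < m) : poch (-(n : ℝ)) m = 0 := by
  induction m with
  | zero => omega
  | succ m ih =>
      rw [poch_succ]
      rcases Nat.lt_or_ge n m with h' | h'
      · rw [ih h']; ring
      · have : n = m := by omega
        subst this; simp

lemma Fc_eq_zero (Δ : ℝ) (n m : ℕ) (h : n < m) : Fc Δ n m = 0 := by
  rw [Fc, poch_nat_zero n m h]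
  ring

lemma Gc_zero (Δ : ℝ) (n : ℕ) : Gc Δ n 0 = 0 := by
  simp [Gc]

lemma Gc_top (Δ : ℝ) (n : ℕ) : Gc Δ n (n+3) = 0 := by
  have h : poch (-((n:ℝ)+2)) (n+3) = 0 := by
    have := poch_nat_zero (n+2) (n+3) (by omega)
    rwa [show (((n+2 : ℕ)) : ℝ) = (n:ℝ)+2 by push_cast; ring] at this
  rw [Gc, h]
  ring

lemma sum_rec (Δ : ℝ) (hΔ : 0 < Δ) (T : ℕ → ℝ)
    (hT : ∀ n : ℕ, T n = ∑ m ∈ Finset.range (n + 1), Fc Δ n m)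
    (n : ℕ) (hb : 4*Δ/3 + (n:ℝ) - 1 ≠ 0) :
    ((n:ℝ) + 4*Δ/3) * ((n:ℝ) + 2*Δ/3 + 1) * T (n+2)
      = ((n:ℝ)+1) * ((n:ℝ) + 2*Δ/3) * T n := by
  have hsum : ∑ m ∈ Finset.range (n+3),
      ((4*Δ/3 + (n:ℝ) - 1) * (4*Δ/3 + (n:ℝ)) * ((n:ℝ)+1) * ((n:ℝ)+2) *
        ( ((n:ℝ) + 4*Δ/3) * ((n:ℝ) + 2*Δ/3 + 1) * Fc Δ (n+2) m
          - ((n:ℝ)+1) * ((n:ℝ) + 2*Δ/3) * Fc Δ n m ))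
      = ∑ m ∈ Finset.range (n+3),
      ((-2*((n:ℝ)+1)*((n:ℝ) + 4*Δ/3)*(2*(n:ℝ) + 4*Δ/3 + 1)) * (Gc Δ n (m+1) - Gc Δ n m)) :=
    Finset.sum_congr rfl fun m _ => pointwise Δ hΔ n m hb
  rw [← Finset.mul_sum, ← Finset.mul_sum, Finset.sum_range_sub (Gc Δ n),
      Gc_zero, Gc_top] at hsum
  have hs2 : ∑ m ∈ Finset.range (n+3),
      ( ((n:ℝ) + 4*Δ/3) * ((n:ℝ) + 2*Δ/3 + 1) * Fc Δ (n+2) m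
        - ((n:ℝ)+1) * ((n:ℝ) + 2*Δ/3) * Fc Δ n m )
      = ((n:ℝ) + 4*Δ/3) * ((n:ℝ) + 2*Δ/3 + 1) * T (n+2)
        - ((n:ℝ)+1) * ((n:ℝ) + 2*Δ/3) * T n := by
    rw [Finset.sum_sub_distrib, ← Finset.mul_sum, ← Finset.mul_sum]
    have e2 : ∑ m ∈ Finset.range (n+3), Fc Δ (n+2) m = T (n+2) := (hT (n+2)).symm
    have e0 : ∑ m ∈ Finset.range (n+3), Fc Δ n m = T n := by
      rw [Finset.sum_range_succ, Finset.sum_range_succ,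
          Fc_eq_zero Δ n (n+1) (by omega), Fc_eq_zero Δ n (n+2) (by omega), hT n]
      ring
    rw [e2, e0]
  rw [hs2] at hsum
  have hb1 : 4*Δ/3 + (n:ℝ) ≠ 0 := by positivity
  have hn1 : (n:ℝ) + 1 ≠ 0 := by positivity
  have hn2 : (n:ℝ) + 2 ≠ 0 := by positivity
  have hX : (4*Δ/3 + (n:ℝ) - 1) * (4*Δ/3 + (n:ℝ)) * ((n:ℝ)+1) * ((n:ℝ)+2) ≠ 0 :=
    mul_ne_zero (mul_ne_zero (mul_ne_zero hb hb1) hn1) hn2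
  have := (mul_eq_zero.mp (by linarith [hsum] :
    (4*Δ/3 + (n:ℝ) - 1) * (4*Δ/3 + (n:ℝ)) * ((n:ℝ)+1) * ((n:ℝ)+2) *
      ( ((n:ℝ) + 4*Δ/3) * ((n:ℝ) + 2*Δ/3 + 1) * T (n+2)
        - ((n:ℝ)+1) * ((n:ℝ) + 2*Δ/3) * T n ) = 0)).resolve_left hX
  linarith [this]


/-- Effective two-term recursion (2.14) for the continuous Hahn values `T_n`
with positive proportionality constant, hence positivity of the even terms. -/
theorem stmt_9 (Δ : ℝ) (hΔ : 0 < Δ) (T : ℕ → ℝ)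
    (hT : ∀ n : ℕ, T n = ∑ m ∈ Finset.range (n + 1),
      (poch (-(n : ℝ)) m * poch (4*Δ/3 + (n : ℝ) - 1) m * poch (Δ/3) m)
      / ((poch (2*Δ/3) m)^2 * (m.factorial : ℝ))) :
    (∀ k : ℕ, 1 ≤ k →
      T (2*k) = (3*(2*(k : ℝ) - 1)*(Δ + 3*(k : ℝ) - 3)
          / ((2*Δ + 3*(k : ℝ) - 3)*(2*Δ + 6*(k : ℝ) - 3))) * T (2*k - 2)
      ∧ 0 < 3*(2*(k : ℝ) - 1)*(Δ + 3*(k : ℝ) - 3)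
          / ((2*Δ + 3*(k : ℝ) - 3)*(2*Δ + 6*(k : ℝ) - 3)))
    ∧ ∀ k : ℕ, 0 < T (2*k) := by
  have hT' : ∀ n : ℕ, T n = ∑ m ∈ Finset.range (n + 1), Fc Δ n m := by
    intro n; rw [hT n]; rfl
  -- base computation : T 0 = 1 and T 2 = 1/(2*(2*Δ/3+1)) * T 0
  have hT0 : T 0 = 1 := by
    rw [hT' 0]
    simp [Fc, poch]
  have hT2 : T 2 = 3*Δ / ((2*Δ) * (2*Δ + 3)) := by
    rw [hT' 2]
    rw [Finset.sum_range_succ, Finset.sum_range_succ, Finset.sum_range_succ,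
        Finset.sum_range_zero]
    simp only [Fc, poch, Nat.factorial]
    push_cast
    have h1 : Δ ≠ 0 := ne_of_gt hΔ
    have h2 : 2*Δ/3 + 1 ≠ 0 := by positivity
    have h3 : 2*Δ + 3 ≠ 0 := by positivity
    field_simp
    ring
  -- the recursion for all k ≥ 1
  have hrec : ∀ k : ℕ, 1 ≤ k →
      T (2*k) = (3*(2*(k : ℝ) - 1)*(Δ + 3*(k : ℝ) - 3)
          / ((2*Δ + 3*(k : ℝ) - 3)*(2*Δ + 6*(k : ℝ) - 3))) * T (2*k - 2) := by
    intro k hk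
    rcases eq_or_lt_of_le hk with h1 | h2
    · -- k = 1
      subst h1
      norm_num [hT2, hT0]
      ring_nf
    · -- k ≥ 2
      have hk2 : 2 ≤ k := h2
      have hkR : (2:ℝ) ≤ (k:ℝ) := by exact_mod_cast hk2
      have hcast : (((2*k - 2 : ℕ)) : ℝ) = 2*(k:ℝ) - 2 := by
        rw [Nat.cast_sub (by omega : 2 ≤ 2*k)]
        push_cast; ring
      have hb : 4*Δ/3 + ((2*k - 2 : ℕ):ℝ) - 1 ≠ 0 := by
        rw [hcast]; nlinarith
      have hrec2 := sum_rec Δ hΔ T hT' (2*k - 2) hb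
      have hidx : 2*k - 2 + 2 = 2*k := by omega
      rw [hidx, hcast] at hrec2
      -- hrec2 : (2k-2+4Δ/3)(2k-2+2Δ/3+1) T(2k) = (2k-2+1)(2k-2+2Δ/3) T(2k-2)
      have hden1 : 2*Δ + 3*(k:ℝ) - 3 ≠ 0 := by nlinarith
      have hden2 : 2*Δ + 6*(k:ℝ) - 3 ≠ 0 := by nlinarith
      rw [div_mul_eq_mul_div, eq_div_iff (mul_ne_zero hden1 hden2)]
      linear_combination (9/2 : ℝ) * hrec2
  have hcpos : ∀ k : ℕ, 1 ≤ k →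
      0 < 3*(2*(k : ℝ) - 1)*(Δ + 3*(k : ℝ) - 3)
          / ((2*Δ + 3*(k : ℝ) - 3)*(2*Δ + 6*(k : ℝ) - 3)) := by
    intro k hk
    have hk1 : (1:ℝ) ≤ (k:ℝ) := by exact_mod_cast hk
    apply div_pos
    · have : (0:ℝ) < 2*(k:ℝ) - 1 := by linarith
      have h2 : (0:ℝ) < Δ + 3*(k:ℝ) - 3 := by linarith
      nlinarith
    · have h3 : (0:ℝ) < 2*Δ + 3*(k:ℝ) - 3 := by linarith
      have h4 : (0:ℝ) < 2*Δ + 6*(k:ℝ) - 3 := by linarith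
      nlinarith
  refine ⟨fun k hk => ⟨hrec k hk, hcpos k hk⟩, ?_⟩
  intro k
  induction k with
  | zero => simpa [hT0] using one_pos
  | succ k ih =>
      have h1 : 1 ≤ k + 1 := by omega
      have heq := hrec (k+1) h1
      have h2 : 2*(k+1) - 2 = 2*k := by omega
      rw [h2] at heq
      rw [heq]
      exact mul_pos (hcpos (k+1) h1) ih
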